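/- Let K be a totally real field of prime degree n, 𝒪 an order in K of discriminant D, and λ ∈ 𝒪 with λ ∉ ℤ. Then the sup norm of the vector of archimedean embeddings of λ satisfies max_i |σ_i(λ)| ≫_n D^{1/(n(n−1))}. -/

import Mathlib

open NumberField

set_option maxHeartbeats 1000000 in
/-- for `K` totally real of prime degree `n`, an order `𝒪 ⊆ K` of
discriminant `D`, and `λ ∈ 𝒪 ∖ ℤ`, one has `max_i |σ_i(λ)| ≫_n D^{1/(n(n−1))}`. -/
theorem stmt_7 (n : ℕ) (hn : n.Prime) :
    ∃ c : ℝ, 0 < c ∧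
      ∀ (K : Type) [Field K] [NumberField K],
        Module.finrank ℚ K = n →
        (∀ v : InfinitePlace K, v.IsReal) →
        ∀ (O : Subalgebra ℤ K) (e : Module.Basis (Fin n) ℤ O) (D : ℝ),
          D = |((Matrix.of fun i j =>
            (Algebra.trace ℚ K ((e i : K) * (e j : K)))).det : ℚ)| →
          ∀ lam : K, lam ∈ O → (∀ m : ℤ, (m : K) ≠ lam) →
            ∃ σ : K →+* ℂ,
              c * D ^ ((1 : ℝ) / (n * (n - 1))) ≤ ‖σ lam‖ := by
  classical
  refine ⟨1/2, by norm_num, ?_⟩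
  intro K _ _ hK _ O e D hD lam hmem hlam
  have hn2 : 2 ≤ n := hn.two_le
  set eK : Fin n → K := fun i => (e i : K) with heK
  -- D in terms of the discriminant
  have hDdisc : D = |((Algebra.discr ℚ eK : ℚ) : ℝ)| := by
    have hmat : (Matrix.of fun i j => (Algebra.trace ℚ K ((e i : K) * (e j : K))))
        = Algebra.traceMatrix ℚ eK := by
      ext i j
      simp [Algebra.traceMatrix_apply, Algebra.traceForm_apply, heK]
    rw [hD, hmat, ← Algebra.discr_def, Rat.cast_abs]
  have hD0 : 0 ≤ D := hDdisc ▸ abs_nonneg _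
  -- embeddings
  have hcard : Fintype.card (K →ₐ[ℚ] ℂ) = n := by rw [AlgHom.card, hK]
  let eq : Fin n ≃ (K →ₐ[ℚ] ℂ) :=
    Fintype.equivOfCardEq (by rw [Fintype.card_fin, hcard])
  obtain ⟨j₀, -, hj₀⟩ := Finset.exists_max_image (Finset.univ : Finset (Fin n))
    (fun j => ‖eq j lam‖) ⟨⟨0, by omega⟩, Finset.mem_univ _⟩
  set Mx := ‖(eq j₀) lam‖ with hMxdef
  have hMx0 : 0 ≤ Mx := norm_nonneg _
  refine ⟨(eq j₀).toRingHom, ?_⟩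
  -- integrality of lam
  have hOfin : Module.Finite ℤ O := Module.Finite.of_basis e
  have hint : IsIntegral ℤ lam := by
    have h1 : IsIntegral ℤ (⟨lam, hmem⟩ : O) := IsIntegral.of_finite ℤ _
    simpa using h1.map O.val
  -- lam is not rational
  have hnotrange : lam ∉ (algebraMap ℚ K).range := by
    rintro ⟨q, hq⟩
    have hqint : IsIntegral ℤ q := by
      rw [← isIntegral_algebraMap_iff (algebraMap ℚ K).injective, hq]; exact hint
    obtain ⟨m, hm⟩ := IsIntegrallyClosed.isIntegral_iff.mp hqint
    exact hlam m (by rw [← hq, ← hm]; simp)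
  -- lam has degree n
  have hintQ : IsIntegral ℚ lam := IsIntegral.of_finite ℚ lam
  have hd_dvd : (minpoly ℚ lam).natDegree ∣ n := hK ▸ minpoly.degree_dvd hintQ
  have hdn : (minpoly ℚ lam).natDegree = n :=
    (hn.eq_one_or_self_of_dvd _ hd_dvd).resolve_left
      (fun h => hnotrange (minpoly.natDegree_eq_one_iff.mp h))
  -- powers of lam are linearly independent
  have hLI : LinearIndependent ℚ (fun i : Fin n => lam ^ (i : ℕ)) := by
    have h := linearIndependent_pow (K := ℚ) lam
    rwa [hdn] at h
  haveI : Nonempty (Fin n) := ⟨⟨0, by omega⟩⟩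
  let bP : Module.Basis (Fin n) ℚ K :=
    basisOfLinearIndependentOfCardEqFinrank hLI (by simp [hK])
  have hbP : ⇑bP = fun i : Fin n => lam ^ (i : ℕ) :=
    coe_basisOfLinearIndependentOfCardEqFinrank _ _
  have hdiscrP : Algebra.discr ℚ (fun i : Fin n => lam ^ (i : ℕ)) ≠ 0 := by
    rw [← hbP]; exact Algebra.discr_not_zero_of_basis ℚ bP
  -- change of basis matrix
  set M : Matrix (Fin n) (Fin n) ℤ :=
    Matrix.of (fun i j => e.repr ⟨lam ^ (i : ℕ), pow_mem hmem _⟩ j) with hMdef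
  have hPvec : (fun i : Fin n => lam ^ (i : ℕ)) =
      ((M.map (algebraMap ℤ ℚ)).map (algebraMap ℚ K)).mulVec eK := by
    funext i
    have h := e.sum_repr ⟨lam ^ (i : ℕ), pow_mem hmem _⟩
    have h2 := congrArg (Subtype.val) h
    simp only [AddSubmonoidClass.coe_finset_sum, SetLike.val_smul, zsmul_eq_mul] at h2
    simp only [Matrix.mulVec, dotProduct, Matrix.map_apply, Matrix.of_apply,
      eq_intCast, map_intCast, hMdef, heK]
    exact h2.symm
  have hrel := Algebra.discr_of_matrix_mulVec eK (M.map (algebraMap ℤ ℚ))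
  rw [← hPvec] at hrel
  have hdet : (M.map (algebraMap ℤ ℚ)).det = (M.det : ℚ) := by
    rw [← RingHom.mapMatrix_apply, ← RingHom.map_det]; simp
  have hMdet : M.det ≠ 0 := by
    intro h
    apply hdiscrP
    rw [hrel, hdet, h]; simp
  -- |discr eK| ≤ |discr powers|
  have hDle : |Algebra.discr ℚ eK| ≤ |Algebra.discr ℚ (fun i : Fin n => lam ^ (i : ℕ))| := by
    rw [hrel, hdet, abs_mul, abs_pow]
    have h1 : (1:ℚ) ≤ |(M.det : ℚ)| ^ 2 := by
      have h2 : (1:ℤ) ≤ |M.det| := Int.one_le_abs hMdet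
      have h3 : (1:ℚ) ≤ |(M.det : ℚ)| := by exact_mod_cast h2
      nlinarith
    exact le_mul_of_one_le_left (abs_nonneg _) h1
  -- vandermonde computation
  have hemb := Algebra.discr_eq_det_embeddingsMatrixReindex_pow_two ℚ ℂ
    (fun i : Fin n => lam ^ (i : ℕ)) eq
  have hembM : Algebra.embeddingsMatrixReindex ℚ ℂ (fun i : Fin n => lam ^ (i : ℕ)) eq
      = (Matrix.vandermonde fun j => eq j lam).transpose := by
    ext i j
    simp [Algebra.embeddingsMatrixReindex, Algebra.embeddingsMatrix, Matrix.vandermonde]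
  rw [hembM, Matrix.det_transpose, Matrix.det_vandermonde] at hemb
  -- bound each factor
  have hfac : ∀ i j : Fin n, ‖eq j lam - eq i lam‖ ≤ 2 * Mx := by
    intro i j
    calc ‖eq j lam - eq i lam‖
        ≤ ‖eq j lam‖ + ‖eq i lam‖ := by
          exact norm_sub_le _ _
      _ ≤ Mx + Mx := add_le_add (hj₀ j (Finset.mem_univ _)) (hj₀ i (Finset.mem_univ _))
      _ = 2 * Mx := by ring
  -- the count of pairs
  have hT : (∑ i : Fin n, (Finset.Ioi i).card) * 2 = n * (n - 1) := by
    have h1 : ∀ i : Fin n, (Finset.Ioi i).card = n - 1 - (i : ℕ) := fun i => Fin.card_Ioi i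
    simp only [h1]
    rw [Fin.sum_univ_eq_sum_range (fun k => n - 1 - k) n]
    rw [show (∑ k ∈ Finset.range n, (n - 1 - k)) = ∑ k ∈ Finset.range n, k from
      Finset.sum_range_reflect (fun j => j) n]
    exact Finset.sum_range_id_mul_two n
  -- main bound : D ≤ (2 Mx)^(n(n-1))
  have hchain : D ≤ (2 * Mx) ^ (n * (n - 1)) := by
    have habsP : ‖algebraMap ℚ ℂ (Algebra.discr ℚ (fun i : Fin n => lam ^ (i : ℕ)))‖
        = |((Algebra.discr ℚ (fun i : Fin n => lam ^ (i : ℕ)) : ℚ) : ℝ)| := by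
      rw [eq_ratCast (algebraMap ℚ ℂ), ← Complex.ofReal_ratCast, Complex.norm_real, Real.norm_eq_abs]
    have hbound : ‖algebraMap ℚ ℂ
        (Algebra.discr ℚ (fun i : Fin n => lam ^ (i : ℕ)))‖ ≤ (2 * Mx) ^ (n * (n - 1)) := by
      rw [hemb, norm_pow, norm_prod]
      simp only [norm_prod]
      calc (∏ i : Fin n, ∏ j ∈ Finset.Ioi i, ‖eq j lam - eq i lam‖) ^ 2
          ≤ (∏ i : Fin n, ∏ j ∈ Finset.Ioi i, (2 * Mx)) ^ 2 := by
            apply pow_le_pow_left₀ (Finset.prod_nonneg fun i _ =>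
              Finset.prod_nonneg fun j _ => norm_nonneg _)
            apply Finset.prod_le_prod (fun i _ => Finset.prod_nonneg fun j _ =>
              norm_nonneg _)
            intro i _
            exact Finset.prod_le_prod (fun j _ => norm_nonneg _)
              (fun j _ => hfac i j)
        _ = (2 * Mx) ^ (n * (n - 1)) := by
            simp only [Finset.prod_const]
            rw [Finset.prod_pow_eq_pow_sum, ← pow_mul, hT]
    calc D = |((Algebra.discr ℚ eK : ℚ) : ℝ)| := hDdisc
      _ ≤ |((Algebra.discr ℚ (fun i : Fin n => lam ^ (i : ℕ)) : ℚ) : ℝ)| := by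
          rw [← Rat.cast_abs, ← Rat.cast_abs]
          exact_mod_cast hDle
      _ ≤ (2 * Mx) ^ (n * (n - 1)) := by rw [← habsP]; exact hbound
  -- conclude with rpow manipulation
  have hNpos : 0 < ((n * (n - 1) : ℕ) : ℝ) := by
    have : 0 < n * (n - 1) := Nat.mul_pos (by omega) (by omega)
    exact_mod_cast this
  have hexp : (n : ℝ) * ((n : ℝ) - 1) = ((n * (n - 1) : ℕ) : ℝ) := by
    push_cast [Nat.cast_sub (by omega : 1 ≤ n)]
    ring
  have final : D ^ ((1 : ℝ) / ((n * (n - 1) : ℕ) : ℝ)) ≤ 2 * Mx := by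
    calc D ^ ((1 : ℝ) / ((n * (n - 1) : ℕ) : ℝ))
        ≤ ((2 * Mx) ^ (n * (n - 1))) ^ ((1 : ℝ) / ((n * (n - 1) : ℕ) : ℝ)) :=
          Real.rpow_le_rpow hD0 hchain (by positivity)
      _ = 2 * Mx := by
          rw [← Real.rpow_natCast (2 * Mx) (n * (n - 1)), ← Real.rpow_mul (by positivity)]
          rw [mul_one_div, div_self (ne_of_gt hNpos), Real.rpow_one]
  have hgoal : (1:ℝ)/2 * D ^ ((1 : ℝ) / ((n:ℝ) * ((n:ℝ) - 1))) ≤ Mx := by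
    rw [hexp]
    linarith
  simpa using hgoal
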